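/- For every real α with 0 ≤ α < 1 and every t > 0 one has Γ(α+1)·(2/t)^α·J_α(t) ≥ J_α(j_{α+1}). -/

import Mathlib

/-- The Bessel function of the first kind of order `ν`,
`J_ν(t) = Σ_{m=0}^∞ (-1)^m / (m!·Γ(m+ν+1)) · (t/2)^{2m+ν}` (for `t > 0`,
using real powers). -/
noncomputable def besselJ (ν : ℝ) (t : ℝ) : ℝ :=
  ∑' m : ℕ, ((-1 : ℝ) ^ m / ((Nat.factorial m) * Real.Gamma ((m : ℝ) + ν + 1))) *
    (t / 2) ^ (2 * (m : ℝ) + ν)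

open Real Set

noncomputable def oc (α : ℝ) (m : ℕ) : ℝ :=
  (-1)^m * Real.Gamma (α+1) / ((m.factorial : ℝ) * Real.Gamma ((m:ℝ) + α + 1) * 4^m)

noncomputable def pc (α : ℝ) (m : ℕ) : ℝ :=
  (-1)^m * Real.Gamma (α+1) / ((m.factorial : ℝ) * Real.Gamma ((m:ℝ) + α + 2) * 4^m)

lemma fact_mul_gamma_le (α : ℝ) (hα : 0 ≤ α) :
    ∀ m : ℕ, (m.factorial : ℝ) * Real.Gamma (α+1) ≤ Real.Gamma ((m:ℝ) + α + 1)
  | 0 => by norm_num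
  | (m+1) => by
      have ih := fact_mul_gamma_le α hα m
      have hg : 0 < Real.Gamma ((m:ℝ) + α + 1) := Real.Gamma_pos_of_pos (by positivity)
      have key : Real.Gamma (((m+1:ℕ):ℝ) + α + 1) = ((m:ℝ)+α+1) * Real.Gamma ((m:ℝ)+α+1) := by
        have e : ((m+1:ℕ):ℝ) + α + 1 = ((m:ℝ)+α+1) + 1 := by push_cast; ring
        rw [e, Real.Gamma_add_one (by positivity)]
      rw [key]
      have hf : (0:ℝ) ≤ (m.factorial : ℝ) * Real.Gamma (α+1) := by
        have := Real.Gamma_pos_of_pos (show (0:ℝ) < α + 1 by linarith)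
        positivity
      calc ((m+1).factorial : ℝ) * Real.Gamma (α+1)
          = ((m:ℝ)+1) * ((m.factorial:ℝ) * Real.Gamma (α+1)) := by
            rw [Nat.factorial_succ]; push_cast; ring
        _ ≤ ((m:ℝ)+1) * Real.Gamma ((m:ℝ)+α+1) := by
            apply mul_le_mul_of_nonneg_left ih (by positivity)
        _ ≤ ((m:ℝ)+α+1) * Real.Gamma ((m:ℝ)+α+1) := by nlinarith

lemma oc_abs_le {α : ℝ} (hα : 0 ≤ α) (m : ℕ) :
    |oc α m| ≤ 1 / ((m.factorial:ℝ) * m.factorial * 4^m) := by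
  have hG1 : 0 < Real.Gamma (α+1) := Real.Gamma_pos_of_pos (by linarith)
  have hGm : 0 < Real.Gamma ((m:ℝ)+α+1) := Real.Gamma_pos_of_pos (by positivity)
  have hf : (0:ℝ) < m.factorial := by exact_mod_cast m.factorial_pos
  have h1 : |oc α m| = Real.Gamma (α+1) / ((m.factorial:ℝ) * Real.Gamma ((m:ℝ)+α+1) * 4^m) := by
    unfold oc
    rw [abs_div, abs_mul, abs_pow, abs_neg, abs_one, one_pow, one_mul,
      abs_of_pos hG1, abs_of_pos (by positivity)]
  rw [h1, div_le_div_iff₀ (by positivity) (by positivity)]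
  have key := fact_mul_gamma_le α hα m
  have h4 : (0:ℝ) < 4^m := by positivity
  nlinarith [mul_le_mul_of_nonneg_left key (le_of_lt (mul_pos hf h4))]

lemma pc_abs_le {α : ℝ} (hα : 0 ≤ α) (m : ℕ) :
    |pc α m| ≤ 1 / ((m.factorial:ℝ) * m.factorial * 4^m) := by
  have hG1 : 0 < Real.Gamma (α+1) := Real.Gamma_pos_of_pos (by linarith)
  have hGm : 0 < Real.Gamma ((m:ℝ)+α+2) := Real.Gamma_pos_of_pos (by positivity)
  have hf : (0:ℝ) < m.factorial := by exact_mod_cast m.factorial_pos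
  have h1 : |pc α m| = Real.Gamma (α+1) / ((m.factorial:ℝ) * Real.Gamma ((m:ℝ)+α+2) * 4^m) := by
    unfold pc
    rw [abs_div, abs_mul, abs_pow, abs_neg, abs_one, one_pow, one_mul,
      abs_of_pos hG1, abs_of_pos (by positivity)]
  have key : (m.factorial : ℝ) * Real.Gamma (α+1) ≤ Real.Gamma ((m:ℝ)+α+2) := by
    have k1 := fact_mul_gamma_le (α+1) (by linarith) m
    have e : (m:ℝ) + (α+1) + 1 = (m:ℝ) + α + 2 := by ring
    rw [e] at k1
    have k2 : Real.Gamma (α+1) ≤ Real.Gamma (α+1+1) := by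
      rw [Real.Gamma_add_one (show (α+1:ℝ) ≠ 0 from by positivity)]
      nlinarith
    nlinarith [mul_le_mul_of_nonneg_left k2 (le_of_lt hf)]
  rw [h1, div_le_div_iff₀ (by positivity) (by positivity)]
  have h4 : (0:ℝ) < 4^m := by positivity
  nlinarith [mul_le_mul_of_nonneg_left key (le_of_lt (mul_pos hf h4))]

noncomputable def Om (α : ℝ) (t : ℝ) : ℝ := ∑' m : ℕ, oc α m * t^(2*m)
noncomputable def Ps (α : ℝ) (t : ℝ) : ℝ := ∑' m : ℕ, pc α m * t^(2*m)

lemma summable_A {c : ℕ → ℝ} (hc : ∀ m, |c m| ≤ 1 / ((m.factorial:ℝ) * m.factorial * 4^m))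
    (t : ℝ) : Summable (fun m => c m * t^(2*m)) := by
  have hs := Real.summable_pow_div_factorial (t^2)
  apply Summable.of_norm_bounded hs
  intro m
  have hf : (1:ℝ) ≤ m.factorial := by exact_mod_cast m.factorial_pos
  have h4 : (1:ℝ) ≤ (4:ℝ)^m := one_le_pow₀ (by norm_num)
  rw [Real.norm_eq_abs, abs_mul, abs_pow]
  have e : |t|^(2*m) = (t^2)^m := by rw [pow_mul, sq_abs]
  rw [e]
  calc |c m| * (t^2)^m ≤ (1 / ((m.factorial:ℝ) * m.factorial * 4^m)) * (t^2)^m :=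
        mul_le_mul_of_nonneg_right (hc m) (by positivity)
    _ ≤ (1 / (m.factorial:ℝ)) * (t^2)^m := by
        apply mul_le_mul_of_nonneg_right _ (by positivity)
        apply div_le_div_of_nonneg_left (by norm_num) (by positivity)
        nlinarith
    _ = (t^2)^m / m.factorial := by ring

lemma term_bound {c : ℕ → ℝ} (hc : ∀ m, |c m| ≤ 1 / ((m.factorial:ℝ) * m.factorial * 4^m))
    {Q : ℝ} (hQ : 1 ≤ Q) {y : ℝ} (hy : |y| ≤ Q) (m : ℕ) :
    ‖c m * (((2*m:ℕ):ℝ) * y^(2*m-1))‖ ≤ 2 * ((Q^2)^m / m.factorial) := by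
  have hf : (1:ℝ) ≤ m.factorial := by exact_mod_cast m.factorial_pos
  have hm : ((m:ℝ)) ≤ m.factorial := by exact_mod_cast Nat.self_le_factorial m
  have h4 : (1:ℝ) ≤ (4:ℝ)^m := one_le_pow₀ (by norm_num)
  have hQ0 : (0:ℝ) < Q := by linarith
  have hfne : (m.factorial:ℝ) ≠ 0 := by positivity
  have h4ne : ((4:ℝ)^m) ≠ 0 := by positivity
  have h1 : |y|^(2*m-1) ≤ (Q^2)^m := by
    calc |y|^(2*m-1) ≤ Q^(2*m-1) := pow_le_pow_left₀ (abs_nonneg y) hy _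
      _ ≤ Q^(2*m) := pow_le_pow_right₀ hQ (Nat.sub_le _ _)
      _ = (Q^2)^m := by rw [← pow_mul]
  rw [Real.norm_eq_abs, abs_mul, abs_mul, abs_pow]
  have e2 : |((2*m:ℕ):ℝ)| = 2*(m:ℝ) := by
    rw [abs_of_nonneg (by positivity)]; push_cast; ring
  rw [e2]
  have step2 : 2*(m:ℝ) * |y|^(2*m-1) ≤ 2*(m.factorial:ℝ) * (Q^2)^m :=
    mul_le_mul (by linarith) h1 (by positivity) (by positivity)
  calc |c m| * (2*(m:ℝ) * |y|^(2*m-1))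
      ≤ (1 / ((m.factorial:ℝ) * m.factorial * 4^m)) * (2*(m.factorial:ℝ) * (Q^2)^m) :=
        mul_le_mul (hc m) step2 (by positivity) (by positivity)
    _ = 2 * ((Q^2)^m / ((m.factorial:ℝ) * 4^m)) := by field_simp
    _ ≤ 2 * ((Q^2)^m / m.factorial) := by
        apply mul_le_mul_of_nonneg_left _ (by norm_num)
        apply div_le_div_of_nonneg_left (by positivity) (by positivity)
        nlinarith

lemma summable_B {c : ℕ → ℝ} (hc : ∀ m, |c m| ≤ 1 / ((m.factorial:ℝ) * m.factorial * 4^m))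
    (t : ℝ) : Summable (fun m => c m * (((2*m:ℕ):ℝ) * t^(2*m-1))) := by
  have hs := (Real.summable_pow_div_factorial ((max 1 |t|)^2)).mul_left 2
  apply Summable.of_norm_bounded hs
  exact fun m => term_bound hc (le_max_left _ _) (le_max_right _ _) m

set_option maxHeartbeats 1000000 in
lemma hasDerivAt_series {c : ℕ → ℝ}
    (hc : ∀ m, |c m| ≤ 1 / ((m.factorial:ℝ) * m.factorial * 4^m)) (x : ℝ) :
    HasDerivAt (fun t => ∑' m : ℕ, c m * t^(2*m))
      (∑' m : ℕ, c m * (((2*m:ℕ):ℝ) * x^(2*m-1))) x := by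
  set R : ℝ := |x| + 1 with hR
  have hR0 : 0 < R := by positivity
  have hR1 : 1 ≤ R := by
    have := abs_nonneg x; simp only [hR]; linarith
  have hx1 : -R < x := by have := neg_abs_le x; simp only [hR]; linarith
  have hx2 : x < R := by have := le_abs_self x; simp only [hR]; linarith
  have hu := (Real.summable_pow_div_factorial ((max 1 R)^2)).mul_left 2
  exact hasDerivAt_tsum_of_isPreconnected hu
    (isOpen_Ioo (a := -R) (b := R)) (convex_Ioo _ _).isPreconnected
    (g' := fun m y => c m * (((2*m:ℕ):ℝ) * y^(2*m-1)))
    (fun m y _ => ((hasDerivAt_pow (2*m) y).const_mul (c m)))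
    (fun m y hy => term_bound hc (le_max_left _ _)
      (le_trans (le_of_lt (abs_lt.2 ⟨hy.1, hy.2⟩)) (le_max_right _ _)) m)
    (y₀ := 0) (Set.mem_Ioo.2 ⟨by linarith, hR0⟩)
    (summable_A hc 0)
    (Set.mem_Ioo.2 ⟨hx1, hx2⟩)
lemma oc_succ {α : ℝ} (hα : 0 ≤ α) (m : ℕ) :
    oc α (m+1) * (2*(m:ℝ)+2) = -(1/2) * pc α m := by
  unfold oc pc
  have e : ((m+1:ℕ):ℝ) + α + 1 = (m:ℝ) + α + 2 := by push_cast; ring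
  rw [e]
  have hG : 0 < Real.Gamma ((m:ℝ)+α+2) := Real.Gamma_pos_of_pos (by positivity)
  have hfe : (((m+1).factorial):ℝ) = ((m:ℝ)+1) * (m.factorial:ℝ) := by
    rw [Nat.factorial_succ]; push_cast; ring
  rw [hfe, pow_succ, pow_succ]
  have hf : ((m.factorial):ℝ) ≠ 0 := by positivity
  have h4 : ((4:ℝ)^m) ≠ 0 := by positivity
  have hm1 : ((m:ℝ)+1) ≠ 0 := by positivity
  field_simp
  ring

lemma oc_eq_pc {α : ℝ} (hα : 0 ≤ α) (m : ℕ) :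
    oc α m = ((m:ℝ)+α+1) * pc α m := by
  unfold oc pc
  have e : (m:ℝ) + α + 2 = ((m:ℝ)+α+1) + 1 := by ring
  rw [e, Real.Gamma_add_one (show ((m:ℝ)+α+1) ≠ 0 from by positivity)]
  have hG : 0 < Real.Gamma ((m:ℝ)+α+1) := Real.Gamma_pos_of_pos (by positivity)
  have hf : ((m.factorial):ℝ) ≠ 0 := by positivity
  have h4 : ((4:ℝ)^m) ≠ 0 := by positivity
  have hm1 : ((m:ℝ)+α+1) ≠ 0 := by positivity
  field_simp

lemma Om_hasDerivAt {α : ℝ} (hα : 0 ≤ α) (x : ℝ) :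
    HasDerivAt (Om α) (-(x/2) * Ps α x) x := by
  have h := hasDerivAt_series (oc_abs_le hα) x
  have hsum : Summable (fun m => oc α m * (((2*m:ℕ):ℝ) * x^(2*m-1))) :=
    summable_B (oc_abs_le hα) x
  have key : (∑' m : ℕ, oc α m * (((2*m:ℕ):ℝ) * x^(2*m-1))) = -(x/2) * Ps α x := by
    rw [Summable.tsum_eq_zero_add hsum]
    have h0 : oc α 0 * (((2*0:ℕ):ℝ) * x^(2*0-1)) = 0 := by norm_num
    rw [h0, zero_add]
    have hterm : ∀ m : ℕ, oc α (m+1) * (((2*(m+1):ℕ):ℝ) * x^(2*(m+1)-1))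
        = -(x/2) * (pc α m * x^(2*m)) := by
      intro m
      have e : 2*(m+1)-1 = 2*m+1 := by omega
      rw [e]
      have hco := oc_succ hα m
      have e2 : (((2*(m+1):ℕ)):ℝ) = 2*(m:ℝ)+2 := by push_cast; ring
      rw [e2, pow_succ]
      linear_combination (x^(2*m)*x) * hco
    rw [tsum_congr hterm, tsum_mul_left]
    rfl
  rw [← key]
  exact h

lemma Ps_hasDerivAt_raw {α : ℝ} (hα : 0 ≤ α) (x : ℝ) :
    HasDerivAt (Ps α) (∑' m : ℕ, pc α m * (((2*m:ℕ):ℝ) * x^(2*m-1))) x :=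
  hasDerivAt_series (pc_abs_le hα) x

lemma Ps_deriv_id {α : ℝ} (hα : 0 ≤ α) (x : ℝ) (hx : x ≠ 0) :
    (∑' m : ℕ, pc α m * (((2*m:ℕ):ℝ) * x^(2*m-1)))
      = (2 * Om α x - (2*α+2) * Ps α x) / x := by
  rw [eq_div_iff hx, ← tsum_mul_right]
  have hterm : ∀ m : ℕ, pc α m * (((2*m:ℕ):ℝ) * x^(2*m-1)) * x
      = 2 * (oc α m * x^(2*m)) - (2*α+2) * (pc α m * x^(2*m)) := by
    intro m
    have hoc := oc_eq_pc hα m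
    cases m with
    | zero =>
        have : oc α 0 = (α+1) * pc α 0 := by simpa using hoc
        norm_num [this]; ring
    | succ k =>
        have e : 2*(k+1)-1 = 2*k+1 := by omega
        have e2 : (((2*(k+1):ℕ)):ℝ) = 2*((k:ℕ):ℝ)+2 := by push_cast; ring
        have e4 : x^(2*(k+1)) = x^(2*k+1)*x := by
          rw [← pow_succ]
          congr 1
        rw [e, e2, e4, hoc]
        push_cast
        ring
  rw [tsum_congr hterm, Summable.tsum_sub ((summable_A (oc_abs_le hα) x).mul_left 2)
    ((summable_A (pc_abs_le hα) x).mul_left (2*α+2)), tsum_mul_left, tsum_mul_left]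
  rfl

lemma Ps_zero {α : ℝ} : Ps α 0 = pc α 0 := by
  unfold Ps
  rw [tsum_eq_single 0]
  · norm_num
  · intro m hm
    have : 2*m ≠ 0 := by omega
    rw [zero_pow this, mul_zero]

lemma pc_zero_pos {α : ℝ} (hα : 0 ≤ α) : 0 < pc α 0 := by
  unfold pc
  have h1 : 0 < Real.Gamma (α+1) := Real.Gamma_pos_of_pos (by linarith)
  have h2 : 0 < Real.Gamma (((0:ℕ):ℝ)+α+2) := Real.Gamma_pos_of_pos (by positivity)
  norm_num
  positivity
lemma abs_tsum_le {g : ℕ → ℝ} (h : Summable fun m => |g m|) :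
    |∑' m : ℕ, g m| ≤ ∑' m : ℕ, |g m| := by
  have h' : Summable fun m => ‖g m‖ := by simpa [Real.norm_eq_abs] using h
  simpa [Real.norm_eq_abs] using norm_tsum_le_tsum_norm h'
lemma fact_sq_ge : ∀ m : ℕ, (4:ℝ) * 9^m ≤ (((m+2).factorial:ℝ))^2
  | 0 => by norm_num [Nat.factorial]
  | (m+1) => by
      have ih := fact_sq_ge m
      have e : (m+1+2).factorial = (m+3) * (m+2).factorial := by
        rw [show m+1+2 = (m+2)+1 by omega, Nat.factorial_succ]
      rw [e]
      push_cast
      have h3 : (3:ℝ) ≤ (m:ℝ)+3 := by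
        have : (0:ℝ) ≤ (m:ℝ) := Nat.cast_nonneg m
        linarith
      have hf : (1:ℝ) ≤ ((m+2).factorial:ℝ) := by exact_mod_cast (m+2).factorial_pos
      have h9 : (0:ℝ) < 9^m := by positivity
      have h9' : (9:ℝ) ≤ ((m:ℝ)+3)^2 := by nlinarith
      calc (4:ℝ)*9^(m+1) = 9*(4*9^m) := by ring
        _ ≤ 9*((m+2).factorial:ℝ)^2 := by linarith
        _ ≤ ((m:ℝ)+3)^2*((m+2).factorial:ℝ)^2 := by nlinarith [sq_nonneg (((m+2).factorial:ℝ))]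
        _ = (((m:ℝ)+3)*((m+2).factorial:ℝ))^2 := by ring

lemma pc_abs_le' {α : ℝ} (hα : 0 ≤ α) (k : ℕ) :
    |pc α k| ≤ pc α 0 / ((k.factorial:ℝ) * k.factorial * 4^k) := by
  have hG1 : 0 < Real.Gamma (α+1) := Real.Gamma_pos_of_pos (by linarith)
  have hG2 : 0 < Real.Gamma (α+2) := Real.Gamma_pos_of_pos (by positivity)
  have hGk : 0 < Real.Gamma ((k:ℝ)+α+2) := Real.Gamma_pos_of_pos (by positivity)
  have hf : (0:ℝ) < k.factorial := by exact_mod_cast k.factorial_pos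
  have h4 : (0:ℝ) < (4:ℝ)^k := by positivity
  have h1 : |pc α k| = Real.Gamma (α+1) / ((k.factorial:ℝ) * Real.Gamma ((k:ℝ)+α+2) * 4^k) := by
    unfold pc
    rw [abs_div, abs_mul, abs_pow, abs_neg, abs_one, one_pow, one_mul,
      abs_of_pos hG1, abs_of_pos (by positivity)]
  have h0 : pc α 0 = Real.Gamma (α+1) / Real.Gamma (α+2) := by
    unfold pc
    norm_num
  have key : (k.factorial:ℝ) * Real.Gamma (α+2) ≤ Real.Gamma ((k:ℝ)+α+2) := by
    have k1 := fact_mul_gamma_le (α+1) (by linarith) k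
    have e : (k:ℝ) + (α+1) + 1 = (k:ℝ) + α + 2 := by ring
    rw [e] at k1
    calc (k.factorial:ℝ) * Real.Gamma (α+2)
        = (k.factorial:ℝ) * Real.Gamma ((α+1)+1) := by rw [show (α+2:ℝ) = α+1+1 by ring]
      _ ≤ Real.Gamma ((k:ℝ)+α+2) := k1
  rw [h1, h0, div_div]
  apply div_le_div_of_nonneg_left hG1.le (by positivity)
  calc Real.Gamma (α+2) * ((k.factorial:ℝ) * k.factorial * 4^k)
      = ((k.factorial:ℝ) * Real.Gamma (α+2)) * ((k.factorial:ℝ) * 4^k) := by ring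
    _ ≤ Real.Gamma ((k:ℝ)+α+2) * ((k.factorial:ℝ) * 4^k) :=
        mul_le_mul_of_nonneg_right key (by positivity)
    _ = (k.factorial:ℝ) * Real.Gamma ((k:ℝ)+α+2) * 4^k := by ring

lemma pc_one {α : ℝ} (hα : 0 ≤ α) : pc α 1 = -(pc α 0) / (4*(α+2)) := by
  unfold pc
  have e1 : ((1:ℕ):ℝ) + α + 2 = (α+1+1) + 1 := by push_cast; ring
  have e0 : ((0:ℕ):ℝ) + α + 2 = (α+1) + 1 := by push_cast; ring
  rw [e1, e0, Real.Gamma_add_one (show (α+1+1:ℝ) ≠ 0 from by positivity)]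
  have hG : Real.Gamma (α+1+1) ≠ 0 := (Real.Gamma_pos_of_pos (by positivity)).ne'
  have h2 : (α+2:ℝ) ≠ 0 := by positivity
  have h11 : (α+1+1:ℝ) ≠ 0 := by positivity
  simp only [Nat.factorial, pow_one, pow_zero, Nat.cast_one]
  field_simp
  push_cast
  ring

set_option maxHeartbeats 1000000 in
lemma Ps_pos_of_lt_two {α : ℝ} (hα : 0 ≤ α) {t : ℝ} (h0 : 0 ≤ t) (h2 : t < 2) :
    0 < Ps α t := by
  set q : ℝ := t^2/4 with hqdef
  have hq0 : 0 ≤ q := by positivity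
  have hq1 : q < 1 := by
    have : t^2 < 4 := by nlinarith
    simp only [hqdef]; linarith
  have hsum : Summable (fun m => pc α m * t^(2*m)) := summable_A (pc_abs_le hα) t
  have hsum1 : Summable (fun m => pc α (m+1) * t^(2*(m+1))) :=
    (summable_nat_add_iff 1).2 hsum
  have hsum2 : Summable (fun m => pc α (m+2) * t^(2*(m+2))) := by
    have := (summable_nat_add_iff 1).2 hsum1
    simpa using this
  have hP0 : 0 < pc α 0 := pc_zero_pos hα
  have hsplit : Ps α t = pc α 0 + (pc α 1 * t^2 + ∑' m : ℕ, pc α (m+2) * t^(2*(m+2))) := by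
    unfold Ps
    rw [Summable.tsum_eq_zero_add hsum, Summable.tsum_eq_zero_add hsum1]
    norm_num
  have htail : |∑' m : ℕ, pc α (m+2) * t^(2*(m+2))| ≤ pc α 0 * (9*q^2/32) := by
    have hterm : ∀ m : ℕ, |pc α (m+2) * t^(2*(m+2))| ≤ pc α 0 * (q^2/4) * (1/9:ℝ)^m := by
      intro m
      set F : ℝ := ((m+2).factorial:ℝ) with hF
      have hfp : (0:ℝ) < F := by rw [hF]; exact_mod_cast (m+2).factorial_pos
      have hfs : (4:ℝ) * 9^m ≤ F^2 := fact_sq_ge m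
      have h9 : (0:ℝ) < 9^m := by positivity
      have key1 : |pc α (m+2)| ≤ pc α 0 / (F * F * 4^(m+2)) := pc_abs_le' hα (m+2)
      have htp : t^(2*(m+2)) = 4^(m+2) * q^(m+2) := by
        rw [← mul_pow, show ((4:ℝ)*q) = t^2 by simp only [hqdef]; ring, ← pow_mul]
      rw [abs_mul, htp, abs_of_nonneg (mul_nonneg (by positivity) (pow_nonneg hq0 _))]
      have hqm : q^m ≤ 1 := pow_le_one₀ hq0 hq1.le
      calc |pc α (m+2)| * ((4:ℝ)^(m+2) * q^(m+2))
          ≤ (pc α 0 / (F * F * 4^(m+2))) * ((4:ℝ)^(m+2) * q^(m+2)) :=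
            mul_le_mul_of_nonneg_right key1 (mul_nonneg (by positivity) (pow_nonneg hq0 _))
        _ = pc α 0 * q^(m+2) / (F * F) := by
            field_simp
        _ ≤ pc α 0 * q^(m+2) / (4 * 9^m) := by
            apply div_le_div_of_nonneg_left (mul_nonneg hP0.le (pow_nonneg hq0 _)) (by positivity)
            nlinarith
        _ = pc α 0 * (q^2/4) * (q^m / 9^m) := by
            field_simp
            ring
        _ ≤ pc α 0 * (q^2/4) * (1/9:ℝ)^m := by
            rw [show ((1/9:ℝ))^m = 1/9^m by rw [div_pow, one_pow]]
            apply mul_le_mul_of_nonneg_left _ (mul_nonneg hP0.le (by positivity))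
            rw [div_le_div_iff₀ h9 h9]
            nlinarith
    calc |∑' m : ℕ, pc α (m+2) * t^(2*(m+2))|
        ≤ ∑' m : ℕ, |pc α (m+2) * t^(2*(m+2))| := abs_tsum_le hsum2.abs
      _ ≤ ∑' m : ℕ, pc α 0 * (q^2/4) * (1/9:ℝ)^m := by
          have hgs : Summable (fun m : ℕ => pc α 0 * (q^2/4) * (1/9:ℝ)^m) :=
            (summable_geometric_of_lt_one (by norm_num) (by norm_num)).mul_left _
          exact Summable.tsum_le_tsum hterm hsum2.abs hgs
      _ = pc α 0 * (q^2/4) * (9/8 : ℝ) := by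
          rw [tsum_mul_left, tsum_geometric_of_lt_one (by norm_num) (by norm_num)]
          norm_num
      _ = pc α 0 * (9*q^2/32) := by ring
  have hmid : pc α 1 * t^2 = -(pc α 0 * q / (α+2)) := by
    rw [pc_one hα]
    have ha2 : (α+2:ℝ) ≠ 0 := by positivity
    simp only [hqdef]
    field_simp
  have hmid2 : -(pc α 0 * q / 2) ≤ pc α 1 * t^2 := by
    rw [hmid, neg_le_neg_iff]
    exact div_le_div_of_nonneg_left (mul_nonneg hP0.le hq0) (by norm_num) (by linarith)
  have htail2 : -(pc α 0 * (9*q^2/32)) ≤ ∑' m : ℕ, pc α (m+2) * t^(2*(m+2)) :=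
    neg_le_of_abs_le htail
  rw [hsplit]
  nlinarith [hP0, hq0, hq1, mul_pos hP0 (show (0:ℝ) < 32 - 16*q - 9*q^2 by nlinarith)]
lemma besselJ_eq_Om {α : ℝ} (hα : 0 ≤ α) {s : ℝ} (hs : 0 < s) :
    besselJ α s = (s/2)^α / Real.Gamma (α+1) * Om α s := by
  unfold besselJ Om
  rw [← tsum_mul_left]
  apply tsum_congr
  intro m
  have hs2 : (0:ℝ) < s/2 := by linarith
  have hrw : ((s/2):ℝ) ^ (2*(m:ℝ)+α) = (s/2)^(2*m) * (s/2)^α := by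
    rw [Real.rpow_add hs2, show (2*(m:ℝ)) = ((2*m:ℕ):ℝ) by push_cast; ring,
      Real.rpow_natCast]
  rw [hrw]
  have hd : ((s/2):ℝ)^(2*m) = s^(2*m) / 4^m := by
    rw [div_pow, show ((2:ℝ))^(2*m) = 4^m by rw [pow_mul]; norm_num]
  rw [hd]
  unfold oc
  have hG1 : Real.Gamma (α+1) ≠ 0 := (Real.Gamma_pos_of_pos (by linarith)).ne'
  have hGm : Real.Gamma ((m:ℝ)+α+1) ≠ 0 := (Real.Gamma_pos_of_pos (by positivity)).ne'
  have hf : ((m.factorial):ℝ) ≠ 0 := by positivity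
  have h4 : ((4:ℝ)^m) ≠ 0 := by positivity
  field_simp

lemma besselJ_eq_Ps {α : ℝ} (hα : 0 ≤ α) {s : ℝ} (hs : 0 < s) :
    besselJ (α+1) s = (s/2)^(α+1) / Real.Gamma (α+1) * Ps α s := by
  unfold besselJ Ps
  rw [← tsum_mul_left]
  apply tsum_congr
  intro m
  have hs2 : (0:ℝ) < s/2 := by linarith
  have hrw : ((s/2):ℝ) ^ (2*(m:ℝ)+(α+1)) = (s/2)^(2*m) * (s/2)^(α+1) := by
    rw [Real.rpow_add hs2, show (2*(m:ℝ)) = ((2*m:ℕ):ℝ) by push_cast; ring,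
      Real.rpow_natCast]
  rw [hrw]
  have hd : ((s/2):ℝ)^(2*m) = s^(2*m) / 4^m := by
    rw [div_pow, show ((2:ℝ))^(2*m) = 4^m by rw [pow_mul]; norm_num]
  rw [hd, show ((m:ℝ) + (α+1) + 1) = (m:ℝ)+α+2 by ring]
  unfold pc
  have hG1 : Real.Gamma (α+1) ≠ 0 := (Real.Gamma_pos_of_pos (by linarith)).ne'
  have hGm : Real.Gamma ((m:ℝ)+α+2) ≠ 0 := (Real.Gamma_pos_of_pos (by positivity)).ne'
  have hf : ((m.factorial):ℝ) ≠ 0 := by positivity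
  have h4 : ((4:ℝ)^m) ≠ 0 := by positivity
  field_simp

lemma Gamma_le_one {α : ℝ} (h0 : 0 ≤ α) (h1 : α ≤ 1) : Real.Gamma (α+1) ≤ 1 := by
  have hc := Real.convexOn_Gamma
  have key := hc.2 (Set.mem_Ioi.2 (by norm_num : (0:ℝ) < 1))
    (Set.mem_Ioi.2 (by norm_num : (0:ℝ) < 2))
    (show (0:ℝ) ≤ 1-α by linarith) h0 (by ring)
  simp only [smul_eq_mul] at key
  rw [show ((1-α)*(1:ℝ) + α*2) = α+1 by ring, Real.Gamma_one, Real.Gamma_two] at key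
  linarith

set_option maxHeartbeats 1000000 in
/-- for `0 ≤ α < 1` and every `t > 0`,
`Γ(α+1)·(2/t)^α·J_α(t) ≥ J_α(j_{α+1})`, where `j_{α+1}` is the smallest
positive zero of the Bessel function `J_{α+1}`. -/
theorem bessel_omega_ge_value_at_zero
    (α : ℝ) (h0 : 0 ≤ α) (h1 : α < 1) (t : ℝ) (ht : 0 < t) (j : ℝ)
    (hj : IsLeast {s : ℝ | 0 < s ∧ besselJ (α + 1) s = 0} j) :
    besselJ α j ≤ Real.Gamma (α + 1) * (2 / t) ^ α * besselJ α t := by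
  obtain ⟨⟨hj0, hjz⟩, hjle⟩ := hj
  have hG1 : (0:ℝ) < Real.Gamma (α+1) := Real.Gamma_pos_of_pos (by linarith)
  have hPsCont : Continuous (Ps α) := by
    apply continuous_iff_continuousAt.2
    intro x
    exact (Ps_hasDerivAt_raw h0 x).differentiableAt.continuousAt
  have hOmCont : Continuous (Om α) := by
    apply continuous_iff_continuousAt.2
    intro x
    exact (Om_hasDerivAt h0 x).differentiableAt.continuousAt
  have hPsj : Ps α j = 0 := by
    have hb := besselJ_eq_Ps h0 hj0
    rw [hjz] at hb
    have h2 : ((j/2:ℝ)^(α+1) / Real.Gamma (α+1)) ≠ 0 := by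
      have hpow : (0:ℝ) < (j/2:ℝ)^(α+1) := Real.rpow_pos_of_pos (by linarith) _
      positivity
    rcases mul_eq_zero.1 hb.symm with h | h
    · exact absurd h h2
    · exact h
  have hPs_pos : ∀ s : ℝ, 0 ≤ s → s < j → 0 < Ps α s := by
    intro s hs0 hsj
    have h0pos : 0 < Ps α 0 := by rw [Ps_zero]; exact pc_zero_pos h0
    rcases lt_or_eq_of_le hs0 with hs0' | hs0'
    · by_contra hle; push_neg at hle
      rcases lt_or_eq_of_le hle with hlt | heq
      · have hcont : ContinuousOn (Ps α) (Set.Icc 0 s) := hPsCont.continuousOn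
        have hmem : (0:ℝ) ∈ Set.Icc (Ps α s) (Ps α 0) := ⟨hlt.le, h0pos.le⟩
        obtain ⟨c, hc, hceq⟩ := intermediate_value_Icc' hs0'.le hcont hmem
        have hc0 : 0 < c := by
          rcases lt_or_eq_of_le hc.1 with h | h
          · exact h
          · exfalso; rw [← h] at hceq; rw [hceq] at h0pos; exact lt_irrefl _ h0pos
        have := hjle ⟨hc0, by rw [besselJ_eq_Ps h0 hc0, hceq, mul_zero]⟩
        linarith [hc.2]
      · have := hjle ⟨hs0', by rw [besselJ_eq_Ps h0 hs0', heq, mul_zero]⟩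
        linarith
    · rw [← hs0']; exact h0pos
  have hj2 : 2 ≤ j := by
    by_contra hlt; push_neg at hlt
    exact (Ps_pos_of_lt_two h0 hj0.le hlt).ne' hPsj
  have hAnti : AntitoneOn (Om α) (Set.Icc 0 j) := by
    apply antitoneOn_of_deriv_nonpos (convex_Icc 0 j) hOmCont.continuousOn
    · intro x hx
      exact (Om_hasDerivAt h0 x).differentiableAt.differentiableWithinAt
    · intro x hx
      rw [interior_Icc] at hx
      rw [(Om_hasDerivAt h0 x).deriv]
      have hp := hPs_pos x hx.1.le hx.2
      nlinarith [hx.1]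
  have hOmj : Om α j ≤ 0 := by
    by_contra hpos; push_neg at hpos
    have hOmpos : ∀ x ∈ Set.Icc (0:ℝ) j, 0 < Om α x := by
      intro x hx
      have := hAnti hx (Set.mem_Icc.2 ⟨hj0.le, le_refl j⟩) hx.2
      linarith
    set G : ℝ → ℝ := fun x => x^(2*α+2) * Ps α x with hGdef
    have hGcont : ContinuousOn G (Set.Icc (j/2) j) := by
      apply ContinuousOn.mul _ hPsCont.continuousOn
      intro x hx
      have hx0 : (0:ℝ) < x := lt_of_lt_of_le (by linarith) hx.1
      exact (Real.continuousAt_rpow_const x _ (Or.inl hx0.ne')).continuousWithinAt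
    have hGmono : StrictMonoOn G (Set.Icc (j/2) j) := by
      apply strictMonoOn_of_deriv_pos (convex_Icc _ _) hGcont
      intro x hx
      rw [interior_Icc] at hx
      have hx0 : (0:ℝ) < x := lt_of_le_of_lt (by linarith : (0:ℝ) ≤ j/2) hx.1
      have hD : HasDerivAt G (2 * x^(2*α+1) * Om α x) x := by
        have hrp : HasDerivAt (fun y : ℝ => y^(2*α+2)) ((2*α+2) * x^(2*α+2-1)) x :=
          Real.hasDerivAt_rpow_const (Or.inl hx0.ne')
        have h2 : HasDerivAt (Ps α) ((2*Om α x - (2*α+2)*Ps α x)/x) x := by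
          have := Ps_hasDerivAt_raw h0 x
          rwa [Ps_deriv_id h0 x hx0.ne'] at this
        have h3 := hrp.mul h2
        rw [hGdef]
        refine h3.congr_deriv ?_
        have e1 : (2*α+2-1 : ℝ) = 2*α+1 := by ring
        have e2 : x^(2*α+2) = x^(2*α+1) * x := by
          rw [show (2*α+2:ℝ) = (2*α+1)+1 by ring, Real.rpow_add_one hx0.ne']
        rw [e1, e2]
        field_simp
        ring
      rw [hD.deriv]
      have hOx : 0 < Om α x := hOmpos x ⟨by linarith, hx.2.le⟩
      have hxp : (0:ℝ) < x^(2*α+1) := Real.rpow_pos_of_pos hx0 _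
      nlinarith
    have hGlt : G (j/2) < G j :=
      hGmono ⟨le_refl _, by linarith⟩ ⟨by linarith, le_refl _⟩ (by linarith)
    have hGj : G j = 0 := by rw [hGdef]; simp only []; rw [hPsj, mul_zero]
    have hGp : 0 < G (j/2) := by
      have hp1 : (0:ℝ) < ((j/2):ℝ)^(2*α+2) := Real.rpow_pos_of_pos (by linarith) _
      have hp2 : 0 < Ps α (j/2) := hPs_pos (j/2) (by linarith) (by linarith)
      rw [hGdef]; exact mul_pos hp1 hp2
    linarith
  have hOmmin : ∀ x : ℝ, 0 < x → Om α j ≤ Om α x := by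
    intro x hx
    rcases le_or_gt x j with hxj | hjx
    · exact hAnti (Set.mem_Icc.2 ⟨hx.le, hxj⟩) (Set.mem_Icc.2 ⟨hj0.le, le_refl j⟩) hxj
    · set E : ℝ → ℝ := fun y => (Om α y)^2 + (y/2 * Ps α y)^2 with hEdef
      have hEcont : Continuous E := by
        rw [hEdef]
        exact (hOmCont.pow 2).add (((continuous_id.div_const 2).mul hPsCont).pow 2)
      have hED : ∀ y : ℝ, y ≠ 0 → HasDerivAt E (-(2*α+1) * (y/2) * (Ps α y)^2) y := by
        intro y hy
        have hOm' := Om_hasDerivAt h0 y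
        have hPs' : HasDerivAt (Ps α) ((2*Om α y - (2*α+2)*Ps α y)/y) y := by
          have := Ps_hasDerivAt_raw h0 y
          rwa [Ps_deriv_id h0 y hy] at this
        have h3 : HasDerivAt (fun z : ℝ => z/2 * Ps α z)
            (1/2 * Ps α y + y/2 * ((2*Om α y - (2*α+2)*Ps α y)/y)) y := by
          have hid : HasDerivAt (fun z : ℝ => z/2) (1/2) y := by
            simpa using (hasDerivAt_id y).div_const 2
          exact hid.mul hPs'
        have h4 := (hOm'.pow 2).add (h3.pow 2)
        rw [hEdef]
        refine h4.congr_deriv ?_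
        field_simp
        ring
      have hE : AntitoneOn E (Set.Icc j x) := by
        apply antitoneOn_of_deriv_nonpos (convex_Icc _ _) hEcont.continuousOn
        · intro y hy; rw [interior_Icc] at hy
          have hy0 : (0:ℝ) < y := by nlinarith [hy.1]
          exact (hED y hy0.ne').differentiableAt.differentiableWithinAt
        · intro y hy; rw [interior_Icc] at hy
          have hy0 : (0:ℝ) < y := by nlinarith [hy.1]
          rw [(hED y hy0.ne').deriv]
          have hnn : 0 ≤ (2*α+1) * (y/2) * (Ps α y)^2 :=
            mul_nonneg (mul_nonneg (by linarith) (by linarith)) (sq_nonneg _)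
          linarith
      have hExj : E x ≤ E j :=
        hE (Set.mem_Icc.2 ⟨le_refl _, hjx.le⟩) (Set.mem_Icc.2 ⟨hjx.le, le_refl _⟩) hjx.le
      have hEj : E j = (Om α j)^2 := by rw [hEdef]; simp only []; rw [hPsj]; ring
      have h5 : (Om α x)^2 ≤ (Om α j)^2 := by
        have hex : (Om α x)^2 ≤ E x := by
          rw [hEdef]; simp only []; nlinarith [sq_nonneg (x/2*Ps α x)]
        rw [hEj] at hExj
        linarith
      nlinarith [hOmj, h5]
  have hRHS : Real.Gamma (α+1) * (2/t)^α * besselJ α t = Om α t := by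
    rw [besselJ_eq_Om h0 ht]
    have hmul : ((2/t:ℝ))^α * ((t/2:ℝ))^α = 1 := by
      rw [← Real.mul_rpow (by positivity) (by positivity),
        show (2/t)*(t/2) = (1:ℝ) by field_simp, Real.one_rpow]
    have hΓ : Real.Gamma (α+1) ≠ 0 := hG1.ne'
    field_simp
    linear_combination (Om α t) * hmul
  rw [hRHS, besselJ_eq_Om h0 hj0]
  have h6 := hOmmin t ht
  have hpow1 : 1 ≤ ((j/2:ℝ))^α := Real.one_le_rpow (by linarith) h0
  have hGle := Gamma_le_one h0 h1.le
  have h7 : ((j/2:ℝ))^α/Real.Gamma (α+1) * Om α j ≤ Om α j := by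
    have h8 : 1 ≤ ((j/2:ℝ))^α/Real.Gamma (α+1) := by
      rw [le_div_iff₀ hG1]; nlinarith
    nlinarith [hOmj]
  linarith
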